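/- Generation lemma for abstractions: for any Lineal term t, Scalar type T and context Γ, if Γ ⊢ λx.t : T then there exist a unit type U and a Scalar type R such that Γ, x:U ⊢ t : R and U→R ⪯ T. Moreover (corollary), if Γ ⊢ λx.t : U→T for a unit type U and Scalar type T, then Γ, x:U ⊢ t : T. -/

import Mathlib

set_option autoImplicit false

namespace Lineal

/-! ### Lineal terms -/

inductive Trm (S : Type) : Type where
  | var : ℕ → Trm S
  | lam : Trm S → Trm S
  | app : Trm S → Trm S → Trm S
  | zero : Trm S
  | smul : S → Trm S → Trm S
  | add : Trm S → Trm S → Trm S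

namespace Trm

variable {S : Type}

/-- Basis terms: variables and abstractions. -/
def IsBasis : Trm S → Prop
  | var _ => True
  | lam _ => True
  | _ => False

/-- de Bruijn shift by `d` of variables `≥ c`. -/
def shift (d : ℕ) : ℕ → Trm S → Trm S
  | c, var k => if k < c then var k else var (k + d)
  | c, lam t => lam (shift d (c + 1) t)
  | c, app t r => app (shift d c t) (shift d c r)
  | _, zero => zero
  | c, smul a t => smul a (shift d c t)
  | c, add t r => add (shift d c t) (shift d c r)

/-- Capture-avoiding substitution `t[s / j]` (de Bruijn). -/
def subst : Trm S → Trm S → ℕ → Trm S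
  | var k, s, j => if k = j then s else if j < k then var (k - 1) else var k
  | lam t, s, j => lam (subst t (shift 1 0 s) (j + 1))
  | app t r, s, j => app (subst t s j) (subst r s j)
  | zero, _, _ => zero
  | smul a t, s, j => smul a (subst t s j)
  | add t r, s, j => add (subst t s j) (subst r s j)

/-- All free variables are `< n`. -/
def ClosedUnder : ℕ → Trm S → Prop
  | n, var k => k < n
  | n, lam t => ClosedUnder (n + 1) t
  | n, app t r => ClosedUnder n t ∧ ClosedUnder n r
  | _, zero => True
  | n, smul _ t => ClosedUnder n t
  | n, add t r => ClosedUnder n t ∧ ClosedUnder n r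

/-- Closed terms. -/
def Closed (t : Trm S) : Prop := ClosedUnder 0 t

def size : Trm S → ℕ
  | var _ => 1
  | lam t => size t + 1
  | app t r => size t + size r + 1
  | zero => 1
  | smul _ t => size t + 1
  | add t r => size t + size r + 1

/-- `(t) r₁ … rₙ`. -/
def appList (t : Trm S) (l : List (Trm S)) : Trm S := l.foldl app t

/-- `t + u₁ + … + uₙ`. -/
def sumList (t : Trm S) (l : List (Trm S)) : Trm S := l.foldl add t

/-- Lifting of a simultaneous substitution under a binder. -/
def msubstLift (ρ : ℕ → Trm S) : ℕ → Trm S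
  | 0 => var 0
  | n + 1 => shift 1 0 (ρ n)

/-- Simultaneous substitution of all free variables. -/
def msubst : (ℕ → Trm S) → Trm S → Trm S
  | ρ, var k => ρ k
  | ρ, lam t => lam (msubst (msubstLift ρ) t)
  | ρ, app t r => app (msubst ρ t) (msubst ρ r)
  | _, zero => zero
  | ρ, smul a t => smul a (msubst ρ t)
  | ρ, add t r => add (msubst ρ t) (msubst ρ r)

end Trm

/-! ### AC equivalence of terms (`+` associative and commutative) -/

inductive ACeq {S : Type} : Trm S → Trm S → Prop
  | refl (t : Trm S) : ACeq t t
  | symm {t u : Trm S} : ACeq t u → ACeq u t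
  | trans {t u v : Trm S} : ACeq t u → ACeq u v → ACeq t v
  | comm (t u : Trm S) : ACeq (Trm.add t u) (Trm.add u t)
  | assoc (t u v : Trm S) : ACeq (Trm.add (Trm.add t u) v) (Trm.add t (Trm.add u v))
  | lamCong {t t' : Trm S} : ACeq t t' → ACeq (Trm.lam t) (Trm.lam t')
  | appCong {t t' r r' : Trm S} : ACeq t t' → ACeq r r' → ACeq (Trm.app t r) (Trm.app t' r')
  | smulCong (a : S) {t t' : Trm S} : ACeq t t' → ACeq (Trm.smul a t) (Trm.smul a t')
  | addCong {t t' r r' : Trm S} : ACeq t t' → ACeq r r' → ACeq (Trm.add t r) (Trm.add t' r')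

/-! ### Reduction -/

/-- `t` is closed and normal (w.r.t. the step relation `St`). -/
def ClosedNormal {S : Type} (St : Trm S → Trm S → Prop) (t : Trm S) : Prop :=
  t.Closed ∧ ∀ u, ¬ St t u

/-- Root rules and one-level contextual closure, parameterised by the step relation `St`
used on proper subterms (both for congruence and for the closed-normal side conditions). -/
inductive Core {S : Type} [CommRing S] (St : Trm S → Trm S → Prop) : Trm S → Trm S → Prop
  -- Elementary rules
  | addZero (t : Trm S) : Core St (Trm.add t Trm.zero) t
  | zeroSmul (t : Trm S) : Core St (Trm.smul 0 t) Trm.zero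
  | oneSmul (t : Trm S) : Core St (Trm.smul 1 t) t
  | smulZero (a : S) : Core St (Trm.smul a Trm.zero) Trm.zero
  | smulSmul (a b : S) (t : Trm S) : Core St (Trm.smul a (Trm.smul b t)) (Trm.smul (a * b) t)
  | smulAdd (a : S) (t r : Trm S) :
      Core St (Trm.smul a (Trm.add t r)) (Trm.add (Trm.smul a t) (Trm.smul a r))
  -- Factorisation rules (side condition : t closed normal)
  | fact1 (a b : S) (t : Trm S) : ClosedNormal St t →
      Core St (Trm.add (Trm.smul a t) (Trm.smul b t)) (Trm.smul (a + b) t)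
  | fact2 (a : S) (t : Trm S) : ClosedNormal St t →
      Core St (Trm.add (Trm.smul a t) t) (Trm.smul (a + 1) t)
  | fact3 (t : Trm S) : ClosedNormal St t →
      Core St (Trm.add t t) (Trm.smul (1 + 1) t)
  -- Application rules
  | appAddL (t r u : Trm S) : ClosedNormal St (Trm.add t r) →
      Core St (Trm.app (Trm.add t r) u) (Trm.add (Trm.app t u) (Trm.app r u))
  | appAddR (u t r : Trm S) : ClosedNormal St (Trm.add t r) →
      Core St (Trm.app u (Trm.add t r)) (Trm.add (Trm.app u t) (Trm.app u r))
  | appSmulL (a : S) (t r : Trm S) : ClosedNormal St t →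
      Core St (Trm.app (Trm.smul a t) r) (Trm.smul a (Trm.app t r))
  | appSmulR (a : S) (r t : Trm S) : ClosedNormal St t →
      Core St (Trm.app r (Trm.smul a t)) (Trm.smul a (Trm.app r t))
  | appZeroL (t : Trm S) : Core St (Trm.app Trm.zero t) Trm.zero
  | appZeroR (t : Trm S) : Core St (Trm.app t Trm.zero) Trm.zero
  -- Beta reduction (b a basis term)
  | beta (t b : Trm S) : Trm.IsBasis b → Core St (Trm.app (Trm.lam t) b) (Trm.subst t b 0)
  -- Contextual closure
  | lamCong {t t' : Trm S} : St t t' → Core St (Trm.lam t) (Trm.lam t')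
  | appL {t t' : Trm S} (r : Trm S) : St t t' → Core St (Trm.app t r) (Trm.app t' r)
  | appR (t : Trm S) {r r' : Trm S} : St r r' → Core St (Trm.app t r) (Trm.app t r')
  | smulCong (a : S) {t t' : Trm S} : St t t' → Core St (Trm.smul a t) (Trm.smul a t')
  | addL {t t' : Trm S} (r : Trm S) : St t t' → Core St (Trm.add t r) (Trm.add t' r)
  | addR (t : Trm S) {r r' : Trm S} : St r r' → Core St (Trm.add t r) (Trm.add t r')

/-- Stratified step relation: `StepN n` is the one-step reduction (modulo AC),
adequate for terms of size at most `n`. -/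
def StepN {S : Type} [CommRing S] : ℕ → Trm S → Trm S → Prop
  | 0, _, _ => False
  | n + 1, t, t' => ∃ u u', ACeq t u ∧ Core (StepN n) u u' ∧ ACeq u' t'

/-- One-step reduction of Lineal, on terms considered modulo AC of `+`. -/
def Step {S : Type} [CommRing S] (t t' : Trm S) : Prop := StepN t.size t t'

/-- Many-step reduction. -/
def RedStar {S : Type} [CommRing S] : Trm S → Trm S → Prop := Relation.ReflTransGen Step

/-- `t` is strongly normalising: every reduction sequence from `t` is finite. -/
def StronglyNormalising {S : Type} [CommRing S] (t : Trm S) : Prop :=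
  Acc (fun a b => Step b a) t

/-- The set of strongly normalising terms. -/
def SNset (S : Type) [CommRing S] : Set (Trm S) := { t | StronglyNormalising t }

end Lineal

namespace Lineal

/-! ### Scalar types -/

inductive STy (S : Type) : Type where
  | var : ℕ → STy S
  | arrow : STy S → STy S → STy S
  | all : STy S → STy S
  | smul : S → STy S → STy S
  | zero : STy S

namespace STy

mutual
  /-- Unit types: `U ::= X | U → T | ∀X.U`. -/
  inductive IsUnit {S : Type} : STy S → Prop
    | var (n : ℕ) : IsUnit (STy.var n)
    | arrow {U T : STy S} : IsUnit U → WF T → IsUnit (STy.arrow U T)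
    | all {U : STy S} : IsUnit U → IsUnit (STy.all U)
  /-- Scalar types: `T ::= U | ∀X.T | α.T | 0̄`. -/
  inductive WF {S : Type} : STy S → Prop
    | unit {U : STy S} : IsUnit U → WF U
    | all {T : STy S} : WF T → WF (STy.all T)
    | smul (a : S) {T : STy S} : WF T → WF (STy.smul a T)
    | zero : WF STy.zero
end

variable {S : Type}

/-- de Bruijn shift of type variables. -/
def shiftTV (d : ℕ) : ℕ → STy S → STy S
  | c, var k => if k < c then var k else var (k + d)
  | c, arrow A B => arrow (shiftTV d c A) (shiftTV d c B)
  | c, all T => all (shiftTV d (c + 1) T)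
  | c, smul a T => smul a (shiftTV d c T)
  | _, zero => zero

/-- `T[U / j]`: capture-avoiding substitution for the type variable `j` (removing it). -/
def substTV : STy S → STy S → ℕ → STy S
  | var k, U, j => if k = j then shiftTV j 0 U else if j < k then var (k - 1) else var k
  | arrow A B, U, j => arrow (substTV A U j) (substTV B U j)
  | all T, U, j => all (substTV T U (j + 1))
  | smul a T, U, j => smul a (substTV T U j)
  | zero, _, _ => zero

/-- Abstract the free type variable `n` of `T` (at depth `c`), so that
`all (closeTV T n 0)` is `∀X.T` where `X` is the free variable `n`. -/
def closeTV : STy S → ℕ → ℕ → STy S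
  | var k, n, c => if k < c then var k else if k = n + c then var c else var (k + 1)
  | arrow A B, n, c => arrow (closeTV A n c) (closeTV B n c)
  | all T, n, c => all (closeTV T n (c + 1))
  | smul a T, n, c => smul a (closeTV T n c)
  | zero, _, _ => zero

/-- `T[U / X]` for a *free* type variable named `n` (no binder is removed). -/
def substFreeAux : STy S → ℕ → STy S → ℕ → STy S
  | var k, n, U, c => if k = n + c then shiftTV c 0 U else var k
  | arrow A B, n, U, c => arrow (substFreeAux A n U c) (substFreeAux B n U c)
  | all T, n, U, c => all (substFreeAux T n U (c + 1))
  | smul a T, n, U, c => smul a (substFreeAux T n U c)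
  | zero, _, _, _ => zero

def substFree (T : STy S) (n : ℕ) (U : STy S) : STy S := substFreeAux T n U 0

/-- Free type variables. -/
def ftvAux : STy S → ℕ → Finset ℕ
  | var k, c => if k < c then ∅ else {k - c}
  | arrow A B, c => ftvAux A c ∪ ftvAux B c
  | all T, c => ftvAux T (c + 1)
  | smul _ T, c => ftvAux T c
  | zero, _ => ∅

def ftv (T : STy S) : Finset ℕ := ftvAux T 0

end STy

/-- Free type variables of a context. -/
def ftvCtx {S : Type} (Γ : List (STy S)) : Finset ℕ :=
  Γ.foldr (fun T s => T.ftv ∪ s) ∅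

/-- Type equivalence `≡`: the least congruence with
`α.0̄ ≡ 0̄`, `0.T ≡ 0̄`, `1.T ≡ T`, `α.(β.T) ≡ (α×β).T`, `∀X.α.T ≡ α.∀X.T`. -/
inductive SEq {S : Type} [CommRing S] : STy S → STy S → Prop
  | refl (T : STy S) : SEq T T
  | symm {T T' : STy S} : SEq T T' → SEq T' T
  | trans {T T' T'' : STy S} : SEq T T' → SEq T' T'' → SEq T T''
  | smulZero (a : S) : SEq (STy.smul a STy.zero) STy.zero
  | zeroSmul (T : STy S) : SEq (STy.smul 0 T) STy.zero
  | oneSmul (T : STy S) : SEq (STy.smul 1 T) T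
  | smulSmul (a b : S) (T : STy S) : SEq (STy.smul a (STy.smul b T)) (STy.smul (a * b) T)
  | allSmul (a : S) (T : STy S) : SEq (STy.all (STy.smul a T)) (STy.smul a (STy.all T))
  | arrowCong {U U' T T' : STy S} : SEq U U' → SEq T T' → SEq (STy.arrow U T) (STy.arrow U' T')
  | allCong {T T' : STy S} : SEq T T' → SEq (STy.all T) (STy.all T')
  | smulCong (a : S) {T T' : STy S} : SEq T T' → SEq (STy.smul a T) (STy.smul a T')

/-- `T ≺ R` iff either `R ≡ ∀X.T`, or `T ≡ ∀X.S` and `R ≡ S[U/X]` for some unit type `U`. -/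
def Prec {S : Type} [CommRing S] (T R : STy S) : Prop :=
  (∃ n : ℕ, SEq R (STy.all (STy.closeTV T n 0))) ∨
  (∃ Sb U : STy S, STy.IsUnit U ∧ SEq T (STy.all Sb) ∧ SEq R (STy.substTV Sb U 0))

/-- `⪯` : reflexive and transitive closure of `≺`. -/
def PrecEq {S : Type} [CommRing S] : STy S → STy S → Prop := Relation.ReflTransGen Prec

/-! ### The Scalar typing judgment -/

inductive Typ {S : Type} [CommRing S] : List (STy S) → Trm S → STy S → Prop
  | ax {Γ : List (STy S)} {n : ℕ} {U : STy S} : Γ[n]? = some U → Typ Γ (Trm.var n) U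
  | equiv {Γ : List (STy S)} {t : Trm S} {T T' : STy S} : Typ Γ t T → SEq T T' → Typ Γ t T'
  | arrE {Γ : List (STy S)} {t r : Trm S} {U T : STy S} {a b : S} :
      Typ Γ t (STy.smul a (STy.arrow U T)) → Typ Γ r (STy.smul b U) →
      Typ Γ (Trm.app t r) (STy.smul (a * b) T)
  | arrI {Γ : List (STy S)} {t : Trm S} {U T : STy S} :
      STy.IsUnit U → Typ (U :: Γ) t T → Typ Γ (Trm.lam t) (STy.arrow U T)
  | allE {Γ : List (STy S)} {t : Trm S} {T U : STy S} :
      Typ Γ t (STy.all T) → STy.IsUnit U → Typ Γ t (STy.substTV T U 0)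
  | allI {Γ : List (STy S)} {t : Trm S} {T : STy S} :
      Typ (Γ.map (STy.shiftTV 1 0)) t T → Typ Γ t (STy.all T)
  | ax0 {Γ : List (STy S)} : Typ Γ Trm.zero STy.zero
  | addI {Γ : List (STy S)} {t r : Trm S} {T : STy S} {a b : S} :
      Typ Γ t (STy.smul a T) → Typ Γ r (STy.smul b T) →
      Typ Γ (Trm.add t r) (STy.smul (a + b) T)
  | smulI {Γ : List (STy S)} {t : Trm S} {T : STy S} (a : S) :
      Typ Γ t T → Typ Γ (Trm.smul a t) (STy.smul a T)

/-! ### λ2^la -/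

inductive FTy : Type where
  | var : ℕ → FTy
  | arrow : FTy → FTy → FTy
  | all : FTy → FTy

namespace FTy

def shiftTV (d : ℕ) : ℕ → FTy → FTy
  | c, var k => if k < c then var k else var (k + d)
  | c, arrow A B => arrow (shiftTV d c A) (shiftTV d c B)
  | c, all A => all (shiftTV d (c + 1) A)

def substTV : FTy → FTy → ℕ → FTy
  | var k, B, j => if k = j then shiftTV j 0 B else if j < k then var (k - 1) else var k
  | arrow A C, B, j => arrow (substTV A B j) (substTV C B j)
  | all A, B, j => all (substTV A B (j + 1))

end FTy

/-- The typing judgment of λ2^la : System F rules over Lineal terms plus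
`ax0`, `+I` and `sI`. -/
inductive FTyp {S : Type} [CommRing S] : List FTy → Trm S → FTy → Prop
  | ax {Γ : List FTy} {n : ℕ} {A : FTy} : Γ[n]? = some A → FTyp Γ (Trm.var n) A
  | arrE {Γ : List FTy} {t r : Trm S} {A B : FTy} :
      FTyp Γ t (FTy.arrow A B) → FTyp Γ r A → FTyp Γ (Trm.app t r) B
  | arrI {Γ : List FTy} {t : Trm S} {A B : FTy} :
      FTyp (A :: Γ) t B → FTyp Γ (Trm.lam t) (FTy.arrow A B)
  | allE {Γ : List FTy} {t : Trm S} {A : FTy} (B : FTy) :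
      FTyp Γ t (FTy.all A) → FTyp Γ t (FTy.substTV A B 0)
  | allI {Γ : List FTy} {t : Trm S} {A : FTy} :
      FTyp (Γ.map (FTy.shiftTV 1 0)) t A → FTyp Γ t (FTy.all A)
  | ax0 {Γ : List FTy} (A : FTy) : FTyp Γ Trm.zero A
  | addI {Γ : List FTy} {t r : Trm S} {A : FTy} :
      FTyp Γ t A → FTyp Γ r A → FTyp Γ (Trm.add t r) A
  | smulI {Γ : List FTy} {t : Trm S} {A : FTy} (a : S) :
      FTyp Γ t A → FTyp Γ (Trm.smul a t) A

/-! ### Saturated sets and the interpretation of λ2^la types -/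

/-- Saturated subsets of SN. -/
structure IsSaturated {S : Type} [CommRing S] (X : Set (Trm S)) : Prop where
  subset_sn : X ⊆ SNset S
  var_app : ∀ (n : ℕ) (l : List (Trm S)), (∀ u ∈ l, u ∈ SNset S) →
      Trm.appList (Trm.var n) l ∈ X
  beta_exp : ∀ (v b : Trm S) (l : List (Trm S)), b.IsBasis →
      Trm.appList (Trm.subst v b 0) l ∈ X → Trm.appList (Trm.app (Trm.lam v) b) l ∈ X
  add_mem : ∀ {t u : Trm S}, t ∈ X → u ∈ X → Trm.add t u ∈ X
  smul_iff : ∀ (a : S) (t : Trm S), t ∈ X ↔ Trm.smul a t ∈ X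
  sum_app : ∀ (u : Trm S) (us l : List (Trm S)),
      (∀ v ∈ u :: us, Trm.appList v l ∈ X) → Trm.appList (Trm.sumList u us) l ∈ X
  app_sum : ∀ (t v : Trm S) (vs l : List (Trm S)),
      (∀ w ∈ v :: vs, Trm.appList (Trm.app t w) l ∈ X) →
      Trm.appList (Trm.app t (Trm.sumList v vs)) l ∈ X
  smul_head : ∀ (a : S) (t : Trm S) (l : List (Trm S)),
      Trm.smul a (Trm.appList t l) ∈ X ↔ Trm.appList (Trm.smul a t) l ∈ X
  smul_arg : ∀ (a : S) (t : Trm S) (l₁ : List (Trm S)) (u : Trm S) (l₂ : List (Trm S)),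
      Trm.smul a (Trm.appList t (l₁ ++ u :: l₂)) ∈ X ↔
      Trm.appList t (l₁ ++ Trm.smul a u :: l₂) ∈ X
  zero_mem : Trm.zero ∈ X
  zero_app : ∀ l : List (Trm S), (∀ u ∈ l, u ∈ SNset S) → Trm.appList Trm.zero l ∈ X
  app_zero : ∀ (t : Trm S) (l : List (Trm S)), t ∈ SNset S → (∀ u ∈ l, u ∈ SNset S) →
      Trm.appList (Trm.app t Trm.zero) l ∈ X

/-- Extension of a type-variable valuation (de Bruijn). -/
def consVal {S : Type} (Y : Set (Trm S)) (ξ : ℕ → Set (Trm S)) : ℕ → Set (Trm S)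
  | 0 => Y
  | n + 1 => ξ n

/-- Interpretation `⟦A⟧_ξ` of a λ2^la type. -/
def FTy.interp {S : Type} [CommRing S] : FTy → (ℕ → Set (Trm S)) → Set (Trm S)
  | FTy.var n, ξ => ξ n
  | FTy.arrow A B, ξ => { F | ∀ s ∈ interp A ξ, Trm.app F s ∈ interp B ξ }
  | FTy.all A, ξ => ⋂ Y ∈ { X : Set (Trm S) | IsSaturated X }, interp A (consVal Y ξ)

/-- `ρ, ξ ⊨ Γ`. -/
def SatCtx {S : Type} [CommRing S] (ρ : ℕ → Trm S) (ξ : ℕ → Set (Trm S))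
    (Γ : List FTy) : Prop :=
  ∀ (n : ℕ) (A : FTy), Γ[n]? = some A → ρ n ∈ FTy.interp A ξ

/-- The `♮` map erasing scalars, sending `0̄` to a fixed λ2^la type `A`. -/
def STy.flat {S : Type} (A : FTy) : STy S → FTy
  | STy.var n => FTy.var n
  | STy.arrow U T => FTy.arrow (flat A U) (flat A T)
  | STy.all T => FTy.all (flat A T)
  | STy.smul _ T => flat A T
  | STy.zero => A

end Lineal
namespace Lineal
namespace STy

variable {S : Type}

/-! ### de Bruijn lemmas for type-level shift/subst/close -/

theorem shiftTV_zero : ∀ (T : STy S) (c : ℕ), shiftTV 0 c T = T := by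
  intro T
  induction T with
  | var k => intro c; simp [shiftTV]
  | arrow A B ihA ihB => intro c; simp [shiftTV, ihA, ihB]
  | all T ih => intro c; simp [shiftTV, ih]
  | smul a T ih => intro c; simp [shiftTV, ih]
  | zero => intro c; simp [shiftTV]

theorem shift_merge : ∀ (V : STy S) (a d e c : ℕ), e ≤ c → c ≤ e + d →
    shiftTV a c (shiftTV d e V) = shiftTV (a + d) e V := by
  intro V
  induction V with
  | var k =>
      intro a d e c h1 h2
      by_cases hk : k < e
      · simp only [shiftTV, if_pos hk, if_pos (show k < c by omega)]
      · simp only [shiftTV, if_neg hk, if_neg (show ¬ k + d < c by omega)]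
        congr 1; omega
  | arrow A B ihA ihB => intro a d e c h1 h2; simp [shiftTV, ihA _ _ _ _ h1 h2, ihB _ _ _ _ h1 h2]
  | all T ih =>
      intro a d e c h1 h2
      simp only [shiftTV]
      rw [ih a d (e+1) (c+1) (by omega) (by omega)]
  | smul b T ih => intro a d e c h1 h2; simp only [shiftTV]; rw [ih _ _ _ _ h1 h2]
  | zero => intro _ _ _ _ _ _; simp [shiftTV]

theorem subst_shift_cancel : ∀ (W V : STy S) (c : ℕ), substTV (shiftTV 1 c W) V c = W := by
  intro W
  induction W with
  | var k =>
      intro V c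
      by_cases hk : k < c
      · simp only [shiftTV, if_pos hk, substTV,
          if_neg (show ¬ k = c by omega), if_neg (show ¬ c < k by omega)]
      · simp only [shiftTV, if_neg hk, substTV,
          if_neg (show ¬ k + 1 = c by omega), if_pos (show c < k + 1 by omega)]
        congr 1 <;> omega
  | arrow A B ihA ihB => intro V c; simp [shiftTV, substTV, ihA, ihB]
  | all T ih => intro V c; simp [shiftTV, substTV, ih]
  | smul a T ih => intro V c; simp [shiftTV, substTV, ih]
  | zero => intro _ _; simp [shiftTV, substTV]

/-- shift below subst commute -/
theorem shift_subst_comm : ∀ (W V : STy S) (c j : ℕ), c ≤ j →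
    substTV (shiftTV 1 c W) V (j+1) = shiftTV 1 c (substTV W V j) := by
  intro W
  induction W with
  | var k =>
      intro V c j hcj
      simp only [shiftTV]
      by_cases hk : k < c
      · rw [if_pos hk]
        simp only [substTV]
        rw [if_neg (by omega), if_neg (by omega), if_neg (by omega), if_neg (by omega)]
        simp [shiftTV, if_pos hk]
      · rw [if_neg hk]
        simp only [substTV]
        by_cases hkj : k = j
        · rw [if_pos (by omega), if_pos hkj]
          subst hkj
          rw [shift_merge V 1 k 0 c (by omega) (by omega), Nat.add_comm]
        · rw [if_neg (by omega), if_neg hkj]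
          by_cases hlt : j < k
          · rw [if_pos (by omega), if_pos hlt]
            simp only [shiftTV]
            rw [if_neg (by omega)]
            congr 1; omega
          · rw [if_neg (by omega), if_neg hlt]
            simp only [shiftTV]
            rw [if_neg hk]
  | arrow A B ihA ihB => intro V c j h; simp [shiftTV, substTV, ihA _ _ _ h, ihB _ _ _ h]
  | all T ih =>
      intro V c j h
      simp only [shiftTV, substTV]
      rw [ih V (c+1) (j+1) (by omega)]
  | smul a T ih => intro V c j h; simp only [shiftTV, substTV]; rw [ih _ _ _ h]
  | zero => intro _ _ _ _; simp [shiftTV, substTV]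

/-- shift above subst commute -/
theorem subst_shift_comm : ∀ (U V : STy S) (c d j : ℕ), c ≤ j →
    substTV (shiftTV d c U) V (j + d) = shiftTV d c (substTV U V j) := by
  intro U
  induction U with
  | var k =>
      intro V c d j hcj
      simp only [shiftTV]
      by_cases hk : k < c
      · rw [if_pos hk]
        simp only [substTV]
        rw [if_neg (by omega), if_neg (by omega), if_neg (by omega), if_neg (by omega)]
        simp [shiftTV, if_pos hk]
      · rw [if_neg hk]
        simp only [substTV]
        by_cases hkj : k = j
        · rw [if_pos (by omega), if_pos hkj]
          subst hkj
          rw [shift_merge V d k 0 c (by omega) (by omega)]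
          congr 1; omega
        · rw [if_neg (by omega), if_neg hkj]
          by_cases hlt : j < k
          · rw [if_pos (by omega), if_pos hlt]
            simp only [shiftTV]
            rw [if_neg (by omega)]
            congr 1; omega
          · rw [if_neg (by omega), if_neg hlt]
            simp only [shiftTV]
            rw [if_neg hk]
  | arrow A B ihA ihB => intro V c d j h; simp [shiftTV, substTV, ihA _ _ _ _ h, ihB _ _ _ _ h]
  | all T ih =>
      intro V c d j h
      simp only [shiftTV, substTV]
      have := ih V (c+1) d (j+1) (by omega)
      rw [show j + d + 1 = j + 1 + d by omega, this]
  | smul a T ih => intro V c d j h; simp only [shiftTV, substTV]; rw [ih _ _ _ _ h]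
  | zero => intro _ _ _ _ _; simp [shiftTV, substTV]

theorem subst_shift_gone : ∀ (V W : STy S) (c d i : ℕ), c ≤ i → i ≤ c + d →
    substTV (shiftTV (d+1) c V) W i = shiftTV d c V := by
  intro V
  induction V with
  | var k =>
      intro W c d i h1 h2
      simp only [shiftTV]
      by_cases hk : k < c
      · rw [if_pos hk, if_pos hk]
        simp only [substTV]
        rw [if_neg (by omega), if_neg (by omega)]
      · rw [if_neg hk, if_neg hk]
        simp only [substTV]
        rw [if_neg (by omega), if_pos (by omega)]
        congr 1 <;> omega
  | arrow A B ihA ihB => intro W c d i h1 h2; simp [shiftTV, substTV, ihA _ _ _ _ h1 h2, ihB _ _ _ _ h1 h2]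
  | all T ih =>
      intro W c d i h1 h2
      simp only [shiftTV, substTV]
      rw [ih W (c+1) d (i+1) (by omega) (by omega)]
  | smul a T ih => intro W c d i h1 h2; simp only [shiftTV, substTV]; rw [ih _ _ _ _ h1 h2]
  | zero => intro _ _ _ _ _ _; simp [shiftTV, substTV]

theorem subst_subst : ∀ (T U V : STy S) (i j : ℕ), i ≤ j →
    substTV (substTV T U i) V j
      = substTV (substTV T V (j+1)) (substTV U V (j-i)) i := by
  intro T
  induction T with
  | var k =>
      intro U V i j hij
      by_cases hk : k = i
      · simp only [substTV, if_pos hk, if_neg (show ¬ k = j + 1 by omega),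
          if_neg (show ¬ j + 1 < k by omega)]
        have h2 := subst_shift_comm U V 0 i (j - i) (Nat.zero_le _)
        rw [show j - i + i = j by omega] at h2
        rw [h2]
      · by_cases hik : i < k
        · by_cases hkj1 : k = j + 1
          · simp only [substTV, if_neg hk, if_pos hik, if_pos hkj1,
              if_pos (show k - 1 = j by omega)]
            rw [subst_shift_gone V _ 0 j i (by omega) (by omega)]
          · by_cases hj1k : j + 1 < k
            · simp only [substTV, if_neg hk, if_pos hik, if_neg hkj1, if_pos hj1k,
                if_neg (show ¬ k - 1 = j by omega), if_pos (show j < k - 1 by omega),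
                if_neg (show ¬ k - 1 = i by omega), if_pos (show i < k - 1 by omega)]
            · simp only [substTV, if_neg hk, if_pos hik, if_neg hkj1, if_neg hj1k,
                if_neg (show ¬ k - 1 = j by omega), if_neg (show ¬ j < k - 1 by omega),
                if_pos hik]
        · simp only [substTV, if_neg hk, if_neg hik, if_neg (show ¬ k = j by omega),
            if_neg (show ¬ j < k by omega), if_neg (show ¬ k = j + 1 by omega),
            if_neg (show ¬ j + 1 < k by omega)]
  | arrow A B ihA ihB => intro U V i j h; simp only [substTV]; rw [ihA _ _ _ _ h, ihB _ _ _ _ h]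
  | all T ih =>
      intro U V i j h
      simp only [substTV]
      rw [ih U V (i+1) (j+1) (by omega), show j + 1 - (i + 1) = j - i by omega]
  | smul a T ih => intro U V i j h; simp only [substTV]; rw [ih _ _ _ _ h]
  | zero => intro _ _ _ _ _; simp [substTV]

end STy

namespace STy

variable {S : Type}

theorem mem_ftvAux_var {x k c : ℕ} : x ∈ ftvAux (var k : STy S) c ↔ (c ≤ k ∧ x = k - c) := by
  simp only [ftvAux]
  split
  · simp; omega
  · simp; omega

theorem close_not_free : ∀ (T : STy S) (m c : ℕ), m ∉ ftvAux T c →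
    closeTV T m c = shiftTV 1 c T := by
  intro T
  induction T with
  | var k =>
      intro m c hm
      rw [mem_ftvAux_var] at hm
      by_cases hk : k < c
      · simp only [closeTV, if_pos hk, shiftTV, if_pos hk]
      · simp only [closeTV, if_neg hk, shiftTV, if_neg hk,
          if_neg (show ¬ k = m + c by omega)]
  | arrow A B ihA ihB =>
      intro m c hm
      simp only [ftvAux, Finset.mem_union, not_or] at hm
      simp only [closeTV, shiftTV, ihA _ _ hm.1, ihB _ _ hm.2]
  | all T ih =>
      intro m c hm
      simp only [ftvAux] at hm
      simp only [closeTV, shiftTV, ih _ _ hm]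
  | smul a T ih =>
      intro m c hm
      simp only [ftvAux] at hm
      simp only [closeTV, shiftTV, ih _ _ hm]
  | zero => intro _ _ _; simp [closeTV, shiftTV]

theorem close_subst_cancel : ∀ (T : STy S) (m c : ℕ),
    substTV (closeTV T m c) (var m) c = T := by
  intro T
  induction T with
  | var k =>
      intro m c
      by_cases hk : k < c
      · simp only [closeTV, if_pos hk, substTV, if_neg (show ¬ k = c by omega),
          if_neg (show ¬ c < k by omega)]
      · by_cases hkm : k = m + c
        · simp only [closeTV, if_neg hk, if_pos hkm, substTV, if_true]
          simp only [shiftTV, if_neg (show ¬ m < 0 by omega)]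
          rw [hkm]
        · simp only [closeTV, if_neg hk, if_neg hkm, substTV,
            if_neg (show ¬ k + 1 = c by omega), if_pos (show c < k + 1 by omega)]
          congr 1 <;> omega
  | arrow A B ihA ihB => intro m c; simp only [closeTV, substTV, ihA, ihB]
  | all T ih => intro m c; simp only [closeTV, substTV, ih]
  | smul a T ih => intro m c; simp only [closeTV, substTV, ih]
  | zero => intro _ _; simp [closeTV, substTV]

theorem subst_close_cancel : ∀ (T : STy S) (n c : ℕ), (n+1) ∉ ftvAux T c →
    closeTV (substTV T (var n) c) n c = T := by
  intro T
  induction T with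
  | var k =>
      intro n c hn
      rw [mem_ftvAux_var] at hn
      by_cases hk : k < c
      · simp only [substTV, if_neg (show ¬ k = c by omega),
          if_neg (show ¬ c < k by omega), closeTV, if_pos hk]
      · by_cases hkc : k = c
        · simp only [substTV, if_pos hkc, shiftTV, if_neg (show ¬ n < 0 by omega),
            closeTV, if_neg (show ¬ n + c < c by omega), if_true]
          rw [hkc]
        · simp only [substTV, if_neg hkc, if_pos (show c < k by omega), closeTV,
            if_neg (show ¬ k - 1 < c by omega), if_neg (show ¬ k - 1 = n + c by omega)]
          congr 1 <;> omega
  | arrow A B ihA ihB =>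
      intro n c hn
      simp only [ftvAux, Finset.mem_union, not_or] at hn
      simp only [substTV, closeTV, ihA _ _ hn.1, ihB _ _ hn.2]
  | all T ih =>
      intro n c hn
      simp only [ftvAux] at hn
      simp only [substTV, closeTV, ih _ _ hn]
  | smul a T ih =>
      intro n c hn
      simp only [ftvAux] at hn
      simp only [substTV, closeTV, ih _ _ hn]
  | zero => intro _ _ _; simp [substTV, closeTV]

theorem close_subst_comm : ∀ (A : STy S) (m n c : ℕ), m ≠ n + 1 → (n+1) ∉ ftvAux A c →
    substTV (closeTV A m c) (var n) (c+1)
      = closeTV (substTV A (var n) c) (if m = 0 then n else m - 1) c := by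
  intro A
  induction A with
  | var k =>
      intro m n c hmn hn
      rw [mem_ftvAux_var] at hn
      by_cases hk : k < c
      · simp only [closeTV, if_pos hk, substTV]
        rw [if_neg (show ¬ k = c + 1 by omega), if_neg (show ¬ c + 1 < k by omega),
          if_neg (show ¬ k = c by omega), if_neg (show ¬ c < k by omega)]
        simp only [closeTV, if_pos hk]
      · by_cases hkm : k = m + c
        · by_cases hm0 : m = 0
          · -- k = c
            simp only [closeTV, if_neg hk, if_pos hkm, substTV]
            rw [if_neg (show ¬ c = c + 1 by omega), if_neg (show ¬ c + 1 < c by omega),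
              if_pos (show k = c by omega)]
            simp only [shiftTV, if_neg (show ¬ n < 0 by omega), closeTV]
            rw [if_neg (show ¬ n + c < c by omega), if_pos hm0]
            simp only [if_true]
          · simp only [closeTV, if_neg hk, if_pos hkm, substTV]
            rw [if_neg (show ¬ c = c + 1 by omega), if_neg (show ¬ c + 1 < c by omega),
              if_neg (show ¬ k = c by omega), if_pos (show c < k by omega)]
            simp only [closeTV]
            rw [if_neg (show ¬ k - 1 < c by omega), if_neg hm0,
              if_pos (show k - 1 = (m-1) + c by omega)]
        · by_cases hkc : k = c
          · -- m ≥ 1 since k ≠ m + c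
            simp only [closeTV, if_neg hk, if_neg hkm, substTV]
            rw [if_pos (show k + 1 = c + 1 by omega)]
            simp only [shiftTV, if_neg (show ¬ n < 0 by omega), substTV]
            rw [if_pos hkc]
            simp only [shiftTV, if_neg (show ¬ n < 0 by omega), closeTV]
            rw [if_neg (show ¬ n + c < c by omega),
              if_neg (show ¬ n + c = (if m = 0 then n else m - 1) + c by split <;> omega)]
            congr 1 <;> omega
          · simp only [closeTV, if_neg hk, if_neg hkm, substTV]
            rw [if_neg (show ¬ k + 1 = c + 1 by omega), if_pos (show c + 1 < k + 1 by omega),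
              if_neg hkc, if_pos (show c < k by omega)]
            simp only [closeTV]
            rw [if_neg (show ¬ k - 1 < c by omega),
              if_neg (show ¬ k - 1 = (if m = 0 then n else m - 1) + c by split <;> omega)]
            congr 1 <;> omega
  | arrow A B ihA ihB =>
      intro m n c hmn hn
      simp only [ftvAux, Finset.mem_union, not_or] at hn
      simp only [closeTV, substTV, ihA _ _ _ hmn hn.1, ihB _ _ _ hmn hn.2]
  | all T ih =>
      intro m n c hmn hn
      simp only [ftvAux] at hn
      simp only [closeTV, substTV, ih _ _ _ hmn hn]
  | smul a T ih =>
      intro m n c hmn hn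
      simp only [ftvAux] at hn
      simp only [closeTV, substTV, ih _ _ _ hmn hn]
  | zero => intro _ _ _ _ _; simp [closeTV, substTV]

theorem ftv_subst_var : ∀ (B : STy S) (n c x : ℕ),
    x ∈ ftvAux (substTV B (var n) c) c → x = n ∨ (x + 1) ∈ ftvAux B c := by
  intro B
  induction B with
  | var k =>
      intro n c x hx
      by_cases hkc : k = c
      · subst hkc
        simp only [substTV, if_true, shiftTV, if_neg (show ¬ n < 0 by omega)] at hx
        rw [mem_ftvAux_var] at hx
        left; omega
      · by_cases hck : c < k
        · simp only [substTV, if_neg hkc, if_pos hck] at hx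
          rw [mem_ftvAux_var] at hx ⊢
          right; omega
        · simp only [substTV, if_neg hkc, if_neg hck] at hx
          rw [mem_ftvAux_var] at hx
          omega
  | arrow A B ihA ihB =>
      intro n c x hx
      simp only [substTV, ftvAux, Finset.mem_union] at hx ⊢
      rcases hx with h | h
      · rcases ihA _ _ _ h with h' | h'
        · exact Or.inl h'
        · exact Or.inr (Or.inl h')
      · rcases ihB _ _ _ h with h' | h'
        · exact Or.inl h'
        · exact Or.inr (Or.inr h')
  | all T ih =>
      intro n c x hx
      simp only [substTV, ftvAux] at hx ⊢
      exact ih _ _ _ hx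
  | smul a T ih =>
      intro n c x hx
      simp only [substTV, ftvAux] at hx ⊢
      exact ih _ _ _ hx
  | zero => intro _ _ _ hx; simp [substTV, ftvAux] at hx

end STy

/-! ### SEq stability -/

section SEqLemmas

variable {S : Type} [CommRing S]

theorem seq_shift {T T' : STy S} (h : SEq T T') :
    ∀ d c, SEq (STy.shiftTV d c T) (STy.shiftTV d c T') := by
  induction h with
  | refl T => intro d c; exact SEq.refl _
  | symm _ ih => intro d c; exact (ih d c).symm
  | trans _ _ ih1 ih2 => intro d c; exact (ih1 d c).trans (ih2 d c)
  | smulZero a => intro d c; simp only [STy.shiftTV]; exact SEq.smulZero a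
  | zeroSmul T => intro d c; simp only [STy.shiftTV]; exact SEq.zeroSmul _
  | oneSmul T => intro d c; simp only [STy.shiftTV]; exact SEq.oneSmul _
  | smulSmul a b T => intro d c; simp only [STy.shiftTV]; exact SEq.smulSmul a b _
  | allSmul a T => intro d c; simp only [STy.shiftTV]; exact SEq.allSmul a _
  | arrowCong _ _ ih1 ih2 => intro d c; simp only [STy.shiftTV]; exact SEq.arrowCong (ih1 d c) (ih2 d c)
  | allCong _ ih => intro d c; simp only [STy.shiftTV]; exact SEq.allCong (ih d (c+1))
  | smulCong a _ ih => intro d c; simp only [STy.shiftTV]; exact SEq.smulCong a (ih d c)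

theorem seq_subst {T T' : STy S} (h : SEq T T') :
    ∀ (V : STy S) (j : ℕ), SEq (STy.substTV T V j) (STy.substTV T' V j) := by
  induction h with
  | refl T => intro V j; exact SEq.refl _
  | symm _ ih => intro V j; exact (ih V j).symm
  | trans _ _ ih1 ih2 => intro V j; exact (ih1 V j).trans (ih2 V j)
  | smulZero a => intro V j; simp only [STy.substTV]; exact SEq.smulZero a
  | zeroSmul T => intro V j; simp only [STy.substTV]; exact SEq.zeroSmul _
  | oneSmul T => intro V j; simp only [STy.substTV]; exact SEq.oneSmul _
  | smulSmul a b T => intro V j; simp only [STy.substTV]; exact SEq.smulSmul a b _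
  | allSmul a T => intro V j; simp only [STy.substTV]; exact SEq.allSmul a _
  | arrowCong _ _ ih1 ih2 => intro V j; simp only [STy.substTV]; exact SEq.arrowCong (ih1 V j) (ih2 V j)
  | allCong _ ih => intro V j; simp only [STy.substTV]; exact SEq.allCong (ih V (j+1))
  | smulCong a _ ih => intro V j; simp only [STy.substTV]; exact SEq.smulCong a (ih V j)

theorem seq_all_zero : SEq (STy.all (STy.zero : STy S)) STy.zero := by
  have h1 : SEq (STy.all (STy.zero : STy S)) (STy.all (STy.smul 0 STy.zero)) :=
    SEq.allCong (SEq.smulZero 0).symm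
  exact (h1.trans (SEq.allSmul 0 _)).trans (SEq.zeroSmul _)

theorem seq_smul_zero_left (T : STy S) : SEq T (STy.smul 1 T) := (SEq.oneSmul T).symm

theorem seq_trivial (h1 : (1 : S) = 0) (A B : STy S) : SEq A B := by
  have key : ∀ C : STy S, SEq C STy.zero := by
    intro C
    have : SEq C (STy.smul 1 C) := (SEq.oneSmul C).symm
    rw [h1] at this
    exact this.trans (SEq.zeroSmul C)
  exact (key A).trans (key B).symm

end SEqLemmas

/-! ### A canonical-form function for `SEq` -/

section NF

variable {S : Type} [CommRing S]

open Classical in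
/-- `mk a N` : canonical `a.N`, collapsing to `0̄` if `a = 0`. -/
noncomputable def mkS (a : S) (N : STy S) : STy S :=
  if a = 0 then STy.zero else STy.smul a N

theorem mkS_eq_zero {a : S} (h : a = 0) (N : STy S) : mkS a N = STy.zero := by
  simp [mkS, h]

theorem mkS_eq_smul {a : S} (h : a ≠ 0) (N : STy S) : mkS a N = STy.smul a N := by
  simp [mkS, h]

/-- Canonical form of a scalar type. -/
noncomputable def nf : STy S → STy S
  | .var k => mkS 1 (.var k)
  | .zero => .zero
  | .arrow A B => mkS 1 (.arrow (nf A) (nf B))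
  | .all T =>
      match nf T with
      | .smul a N => .smul a (.all N)
      | _ => .zero
  | .smul a T =>
      match nf T with
      | .smul b N => mkS (a * b) N
      | _ => .zero

theorem nf_var (k : ℕ) : nf (STy.var k : STy S) = mkS 1 (.var k) := by simp [nf]
theorem nf_zero : nf (STy.zero : STy S) = STy.zero := by simp [nf]
theorem nf_arrow (A B : STy S) : nf (STy.arrow A B) = mkS 1 (.arrow (nf A) (nf B)) := by
  simp [nf]

theorem nf_all_of_zero {T : STy S} (h : nf T = STy.zero) : nf (STy.all T) = STy.zero := by
  simp only [nf]
  rw [h]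

theorem nf_all_of_smul {T : STy S} {a : S} {N : STy S} (h : nf T = STy.smul a N) :
    nf (STy.all T) = STy.smul a (STy.all N) := by
  simp only [nf]
  rw [h]

theorem nf_smul_of_zero {T : STy S} (a : S) (h : nf T = STy.zero) :
    nf (STy.smul a T) = STy.zero := by
  simp only [nf]
  rw [h]

theorem nf_smul_of_smul {T : STy S} (a : S) {b : S} {N : STy S} (h : nf T = STy.smul b N) :
    nf (STy.smul a T) = mkS (a * b) N := by
  simp only [nf]
  rw [h]

/-- Shape invariant of `nf`. -/
theorem nf_shape : ∀ T : STy S, nf T = STy.zero ∨ ∃ a N, nf T = STy.smul a N ∧ a ≠ 0 := by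
  intro T
  induction T with
  | var k =>
      by_cases h : (1:S) = 0
      · left; rw [nf_var, mkS_eq_zero h]
      · right; exact ⟨1, _, by rw [nf_var, mkS_eq_smul h], h⟩
  | arrow A B ihA ihB =>
      by_cases h : (1:S) = 0
      · left; rw [nf_arrow, mkS_eq_zero h]
      · right; exact ⟨1, _, by rw [nf_arrow, mkS_eq_smul h], h⟩
  | all T ih =>
      rcases ih with h | ⟨a, N, h, ha⟩
      · left; exact nf_all_of_zero h
      · right; exact ⟨a, STy.all N, nf_all_of_smul h, ha⟩
  | smul a T ih =>
      rcases ih with h | ⟨b, N, h, hb⟩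
      · left; exact nf_smul_of_zero a h
      · by_cases hab : a * b = 0
        · left; rw [nf_smul_of_smul a h, mkS_eq_zero hab]
        · right; exact ⟨a*b, N, by rw [nf_smul_of_smul a h, mkS_eq_smul hab], hab⟩
  | zero => left; exact nf_zero

/-- `T ≡ nf T`. -/
theorem seq_nf : ∀ T : STy S, SEq T (nf T) := by
  intro T
  induction T with
  | var k =>
      rw [nf_var]
      by_cases h : (1:S) = 0
      · rw [mkS_eq_zero h]; exact seq_trivial h _ _
      · rw [mkS_eq_smul h]; exact (SEq.oneSmul _).symm
  | arrow A B ihA ihB =>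
      rw [nf_arrow]
      have h1 : SEq (STy.arrow A B) (STy.arrow (nf A) (nf B)) := SEq.arrowCong ihA ihB
      by_cases h : (1:S) = 0
      · rw [mkS_eq_zero h]; exact seq_trivial h _ _
      · rw [mkS_eq_smul h]; exact h1.trans (SEq.oneSmul _).symm
  | all T ih =>
      rcases nf_shape T with h | ⟨a, N, h, ha⟩
      · rw [nf_all_of_zero h]
        rw [h] at ih
        exact (SEq.allCong ih).trans seq_all_zero
      · rw [nf_all_of_smul h]
        rw [h] at ih
        exact (SEq.allCong ih).trans (SEq.allSmul a N)
  | smul a T ih =>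
      rcases nf_shape T with h | ⟨b, N, h, hb⟩
      · rw [nf_smul_of_zero a h]
        rw [h] at ih
        exact (SEq.smulCong a ih).trans (SEq.smulZero a)
      · rw [nf_smul_of_smul a h]
        rw [h] at ih
        have h2 : SEq (STy.smul a T) (STy.smul (a*b) N) :=
          (SEq.smulCong a ih).trans (SEq.smulSmul a b N)
        by_cases hab : a * b = 0
        · rw [mkS_eq_zero hab]
          rw [hab] at h2
          exact h2.trans (SEq.zeroSmul N)
        · rw [mkS_eq_smul hab]; exact h2
  | zero => rw [nf_zero]; exact SEq.refl _

/-- Soundness: `SEq`-equal types have equal canonical forms. -/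
theorem nf_sound {T T' : STy S} (h : SEq T T') : nf T = nf T' := by
  induction h with
  | refl T => rfl
  | symm _ ih => exact ih.symm
  | trans _ _ ih1 ih2 => exact ih1.trans ih2
  | smulZero a => rw [nf_smul_of_zero a nf_zero, nf_zero]
  | zeroSmul T =>
      rcases nf_shape T with h | ⟨b, N, h, hb⟩
      · rw [nf_smul_of_zero 0 h, nf_zero]
      · rw [nf_smul_of_smul 0 h, nf_zero, mkS_eq_zero (by ring)]
  | oneSmul T =>
      rcases nf_shape T with h | ⟨b, N, h, hb⟩
      · rw [nf_smul_of_zero 1 h, h]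
      · rw [nf_smul_of_smul 1 h, h, mkS_eq_smul (by simpa using hb), one_mul]
  | smulSmul a b T =>
      rcases nf_shape T with h | ⟨c, N, h, hc⟩
      · rw [nf_smul_of_zero a (nf_smul_of_zero b h), nf_smul_of_zero (a*b) h]
      · by_cases hbc : b * c = 0
        · rw [nf_smul_of_zero a
              (show nf (STy.smul b T) = STy.zero by rw [nf_smul_of_smul b h, mkS_eq_zero hbc]),
            nf_smul_of_smul (a*b) h, mkS_eq_zero (by rw [mul_assoc, hbc, mul_zero])]
        · rw [nf_smul_of_smul a
              (show nf (STy.smul b T) = STy.smul (b*c) N by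
                rw [nf_smul_of_smul b h, mkS_eq_smul hbc]),
            nf_smul_of_smul (a*b) h, mul_assoc]
  | allSmul a T =>
      rcases nf_shape T with h | ⟨c, N, h, hc⟩
      · rw [nf_all_of_zero (nf_smul_of_zero a h), nf_smul_of_zero a (nf_all_of_zero h)]
      · by_cases hac : a * c = 0
        · rw [nf_all_of_zero (by rw [nf_smul_of_smul a h, mkS_eq_zero hac]),
            nf_smul_of_smul a (nf_all_of_smul h), mkS_eq_zero hac]
        · rw [nf_all_of_smul (by rw [nf_smul_of_smul a h, mkS_eq_smul hac]),
            nf_smul_of_smul a (nf_all_of_smul h), mkS_eq_smul hac]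
  | arrowCong _ _ ih1 ih2 => rw [nf_arrow, nf_arrow, ih1, ih2]
  | @allCong T T' hTT' ih =>
      rcases nf_shape T with h | ⟨c, N, h, hc⟩
      · rw [nf_all_of_zero h, nf_all_of_zero (by rw [← ih, h])]
      · rw [nf_all_of_smul h, nf_all_of_smul (show nf T' = STy.smul c N by rw [← ih, h])]
  | @smulCong a T T' hTT' ih =>
      rcases nf_shape T with h | ⟨c, N, h, hc⟩
      · rw [nf_smul_of_zero a h, nf_smul_of_zero a (by rw [← ih, h])]
      · rw [nf_smul_of_smul a h,
          nf_smul_of_smul a (show nf T' = STy.smul c N by rw [← ih, h])]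

theorem seq_of_nf_eq {T T' : STy S} (h : nf T = nf T') : SEq T T' :=
  (seq_nf T).trans (h ▸ (seq_nf T').symm)

/-! ### Inversion lemmas for `SEq` (nontrivial ring) -/

theorem seq_arrow_arrow (h1 : (1:S) ≠ 0) {A B A' B' : STy S}
    (h : SEq (STy.arrow A B) (STy.arrow A' B')) : SEq A A' ∧ SEq B B' := by
  have := nf_sound h
  rw [nf_arrow, nf_arrow, mkS_eq_smul h1, mkS_eq_smul h1] at this
  injection this with _ this
  injection this with this1 this2
  exact ⟨seq_of_nf_eq this1, seq_of_nf_eq this2⟩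

theorem seq_arrow_all (h1 : (1:S) ≠ 0) {A B C : STy S}
    (h : SEq (STy.arrow A B) (STy.all C)) : False := by
  have heq := nf_sound h
  rw [nf_arrow, mkS_eq_smul h1] at heq
  rcases nf_shape C with hC | ⟨a, N, hC, ha⟩
  · rw [nf_all_of_zero hC] at heq; cases heq
  · rw [nf_all_of_smul hC] at heq
    injection heq with _ heq
    cases heq

theorem seq_all_all {A B : STy S} (h : SEq (STy.all A) (STy.all B)) : SEq A B := by
  have heq := nf_sound h
  rcases nf_shape A with hA | ⟨a, N, hA, ha⟩ <;>
    rcases nf_shape B with hB | ⟨b, M, hB, hb⟩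
  · exact seq_of_nf_eq (hA.trans hB.symm)
  · rw [nf_all_of_zero hA, nf_all_of_smul hB] at heq; exact absurd heq (by simp)
  · rw [nf_all_of_smul hA, nf_all_of_zero hB] at heq; exact absurd heq (by simp)
  · rw [nf_all_of_smul hA, nf_all_of_smul hB] at heq
    injection heq with heq1 heq2
    injection heq2 with heq2
    apply seq_of_nf_eq
    rw [hA, hB, heq1, heq2]

end NF

/-! ### Unit/WF preservation under shift and substitution -/

section UnitWF

variable {S : Type}

open STy in
theorem unit_wf_shift : ∀ T : STy S, ∀ d c,
    (IsUnit T → IsUnit (shiftTV d c T)) ∧ (WF T → WF (shiftTV d c T)) := by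
  intro T
  induction T with
  | var k =>
      intro d c
      constructor
      · intro _; simp only [shiftTV]; split <;> exact IsUnit.var _
      · intro _; simp only [shiftTV]; split <;> exact WF.unit (IsUnit.var _)
  | arrow A B ihA ihB =>
      intro d c
      have hu : IsUnit (arrow A B) → IsUnit (shiftTV d c (arrow A B)) := by
        intro h
        cases h with
        | arrow hA hB =>
            simp only [shiftTV]
            exact IsUnit.arrow ((ihA d c).1 hA) ((ihB d c).2 hB)
      refine ⟨hu, fun h => ?_⟩
      cases h with
      | unit h => exact WF.unit (hu h)
  | all T ih =>
      intro d c
      have hu : IsUnit (all T) → IsUnit (shiftTV d c (all T)) := by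
        intro h
        cases h with
        | all hT => simp only [shiftTV]; exact IsUnit.all ((ih d (c+1)).1 hT)
      refine ⟨hu, fun h => ?_⟩
      cases h with
      | unit h => exact WF.unit (hu h)
      | all hT => simp only [shiftTV]; exact WF.all ((ih d (c+1)).2 hT)
  | smul a T ih =>
      intro d c
      refine ⟨(fun h => by cases h), fun h => ?_⟩
      cases h with
      | unit h => cases h
      | smul _ hT => simp only [shiftTV]; exact WF.smul a ((ih d c).2 hT)
  | zero =>
      intro d c
      refine ⟨(fun h => by cases h), fun _ => ?_⟩
      simp only [shiftTV]; exact WF.zero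

open STy in
theorem unit_wf_subst : ∀ T : STy S, ∀ (V : STy S) (j : ℕ), IsUnit V →
    (IsUnit T → IsUnit (substTV T V j)) ∧ (WF T → WF (substTV T V j)) := by
  intro T
  induction T with
  | var k =>
      intro V j hV
      have hu : IsUnit (substTV (var k : STy S) V j) := by
        simp only [substTV]
        split
        · exact (unit_wf_shift V j 0).1 hV
        · split <;> exact IsUnit.var _
      exact ⟨fun _ => hu, fun _ => WF.unit hu⟩
  | arrow A B ihA ihB =>
      intro V j hV
      have hu : IsUnit (arrow A B) → IsUnit (substTV (arrow A B) V j) := by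
        intro h
        cases h with
        | arrow hA hB =>
            simp only [substTV]
            exact IsUnit.arrow ((ihA V j hV).1 hA) ((ihB V j hV).2 hB)
      refine ⟨hu, fun h => ?_⟩
      cases h with
      | unit h => exact WF.unit (hu h)
  | all T ih =>
      intro V j hV
      have hu : IsUnit (all T) → IsUnit (substTV (all T) V j) := by
        intro h
        cases h with
        | all hT => simp only [substTV]; exact IsUnit.all ((ih V (j+1) hV).1 hT)
      refine ⟨hu, fun h => ?_⟩
      cases h with
      | unit h => exact WF.unit (hu h)
      | all hT => simp only [substTV]; exact WF.all ((ih V (j+1) hV).2 hT)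
  | smul a T ih =>
      intro V j hV
      refine ⟨(fun h => by cases h), fun h => ?_⟩
      cases h with
      | unit h => cases h
      | smul _ hT => simp only [substTV]; exact WF.smul a ((ih V j hV).2 hT)
  | zero =>
      intro V j hV
      refine ⟨(fun h => by cases h), fun _ => ?_⟩
      simp only [substTV]; exact WF.zero

end UnitWF

/-! ### Skeletons of canonical forms of unit / WF types -/

section Skel

variable {S : Type} [CommRing S]

mutual
  inductive SkU : STy S → Prop
    | var (k : ℕ) : SkU (STy.var k)
    | arrow {P Q : STy S} : SkU P → NWp Q → SkU (STy.arrow (STy.smul 1 P) Q)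
    | all {P : STy S} : SkU P → SkU (STy.all P)
  inductive SkW : STy S → Prop
    | unit {P : STy S} : SkU P → SkW P
    | all {N : STy S} : SkW N → SkW (STy.all N)
  inductive NWp : STy S → Prop
    | zero : NWp STy.zero
    | smul (c : S) {N : STy S} : SkW N → NWp (STy.smul c N)
end

theorem nwp_smul_inv {c : S} {N : STy S} (h : NWp (STy.smul c N)) : SkW N := by
  cases h with
  | smul _ h => exact h

theorem skw_arrow_inv {A B : STy S} (h : SkW (STy.arrow A B)) :
    ∃ P, A = STy.smul 1 P ∧ SkU P ∧ NWp B := by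
  cases h with
  | unit h => cases h with | arrow hP hQ => exact ⟨_, rfl, hP, hQ⟩

theorem skw_all_inv {N : STy S} (h : SkW (STy.all N)) : SkW N := by
  cases h with
  | unit h => cases h with | all hP => exact SkW.unit hP
  | all h => exact h

/-- size of a type -/
def tsz : STy S → ℕ
  | .var _ => 1
  | .arrow A B => tsz A + tsz B + 1
  | .all T => tsz T + 1
  | .smul _ T => tsz T + 1
  | .zero => 1

theorem tsz_pos : ∀ T : STy S, 1 ≤ tsz T := by
  intro T; cases T <;> simp [tsz]

theorem real_aux : ∀ n : ℕ, ∀ N : STy S, tsz N ≤ n →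
    ((SkU N → ∃ U, STy.IsUnit U ∧ SEq N U) ∧
     (SkW N → ∀ c : S, ∃ W, STy.WF W ∧ SEq (STy.smul c N) W) ∧
     (NWp N → ∃ W, STy.WF W ∧ SEq N W)) := by
  intro n
  induction n with
  | zero => intro N hN; have := tsz_pos N; omega
  | succ n ih =>
      intro N hN
      have hU : SkU N → ∃ U, STy.IsUnit U ∧ SEq N U := by
        intro h
        cases h with
        | var k => exact ⟨STy.var k, STy.IsUnit.var k, SEq.refl _⟩
        | @arrow P Q hP hQ =>
            obtain ⟨U', hU', hsU'⟩ := (ih P (by simp [tsz] at hN ⊢; omega)).1 hP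
            obtain ⟨W, hW, hsW⟩ := (ih Q (by simp [tsz] at hN ⊢; omega)).2.2 hQ
            refine ⟨STy.arrow U' W, STy.IsUnit.arrow hU' hW, ?_⟩
            exact SEq.arrowCong ((SEq.oneSmul P).trans hsU') hsW
        | @all P hP =>
            obtain ⟨U', hU', hsU'⟩ := (ih P (by simp [tsz] at hN ⊢; omega)).1 hP
            exact ⟨STy.all U', STy.IsUnit.all hU', SEq.allCong hsU'⟩
      refine ⟨hU, ?_, ?_⟩
      · intro h c
        cases h with
        | unit hP =>
            obtain ⟨U, hUu, hsU⟩ := hU hP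
            exact ⟨STy.smul c U, STy.WF.smul c (STy.WF.unit hUu), SEq.smulCong c hsU⟩
        | @all N' hN' =>
            obtain ⟨W', hW', hsW'⟩ := ((ih N' (by simp [tsz] at hN ⊢; omega)).2.1 hN') c
            refine ⟨STy.all W', STy.WF.all hW', ?_⟩
            exact (SEq.allSmul c N').symm.trans (SEq.allCong hsW')
      · intro h
        cases h with
        | zero => exact ⟨STy.zero, STy.WF.zero, SEq.refl _⟩
        | @smul c N' hN' =>
            exact ((ih N' (by simp [tsz] at hN ⊢; omega)).2.1 hN') c

theorem real_skw {N : STy S} (h : SkW N) (c : S) :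
    ∃ W, STy.WF W ∧ SEq (STy.smul c N) W :=
  ((real_aux (tsz N) N le_rfl).2.1 h) c

/-- Canonical forms of unit and WF types. -/
theorem nf_unit_wf (h1 : (1:S) ≠ 0) : ∀ T : STy S,
    (STy.IsUnit T → ∃ P, nf T = STy.smul 1 P ∧ SkU P) ∧
    (STy.WF T → NWp (nf T)) := by
  intro T
  induction T with
  | var k =>
      constructor
      · intro _; exact ⟨STy.var k, by rw [nf_var, mkS_eq_smul h1], SkU.var k⟩
      · intro _
        rw [nf_var, mkS_eq_smul h1]
        exact NWp.smul 1 (SkW.unit (SkU.var k))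
  | arrow A B ihA ihB =>
      have hu : STy.IsUnit (STy.arrow A B) →
          ∃ P, nf (STy.arrow A B) = STy.smul 1 P ∧ SkU P := by
        intro h
        cases h with
        | arrow hA hB =>
            obtain ⟨P, hP, hPsk⟩ := ihA.1 hA
            have hQ := ihB.2 hB
            refine ⟨STy.arrow (STy.smul 1 P) (nf B), ?_, SkU.arrow hPsk hQ⟩
            rw [nf_arrow, mkS_eq_smul h1, hP]
      refine ⟨hu, fun h => ?_⟩
      cases h with
      | unit h =>
          obtain ⟨P, hP, hPsk⟩ := hu h
          rw [hP]
          exact NWp.smul 1 (SkW.unit hPsk)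
  | all T ih =>
      have hu : STy.IsUnit (STy.all T) →
          ∃ P, nf (STy.all T) = STy.smul 1 P ∧ SkU P := by
        intro h
        cases h with
        | all hT =>
            obtain ⟨P, hP, hPsk⟩ := ih.1 hT
            exact ⟨STy.all P, nf_all_of_smul hP, SkU.all hPsk⟩
      refine ⟨hu, fun h => ?_⟩
      cases h with
      | unit h =>
          obtain ⟨P, hP, hPsk⟩ := hu h
          rw [hP]
          exact NWp.smul 1 (SkW.unit hPsk)
      | all hT =>
          rcases nf_shape T with h0 | ⟨d, N, hdN, hd⟩
          · rw [nf_all_of_zero h0]; exact NWp.zero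
          · have := ih.2 hT
            rw [hdN] at this
            rw [nf_all_of_smul hdN]
            exact NWp.smul d (SkW.all (nwp_smul_inv this))
  | smul a T ih =>
      refine ⟨(fun h => by cases h), fun h => ?_⟩
      cases h with
      | unit h => cases h
      | smul _ hT =>
          rcases nf_shape T with h0 | ⟨d, N, hdN, hd⟩
          · rw [nf_smul_of_zero a h0]; exact NWp.zero
          · have := ih.2 hT
            rw [hdN] at this
            rw [nf_smul_of_smul a hdN]
            by_cases had : a * d = 0
            · rw [mkS_eq_zero had]; exact NWp.zero
            · rw [mkS_eq_smul had]; exact NWp.smul _ (nwp_smul_inv this)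
  | zero =>
      refine ⟨(fun h => by cases h), fun _ => ?_⟩
      rw [nf_zero]; exact NWp.zero

end Skel

/-! ### Every type derivable in a unit context is equivalent to a WF type -/

section TypEW

variable {S : Type} [CommRing S]

theorem seq_of_nf_zero {T : STy S} (h : nf T = STy.zero) : SEq T STy.zero := by
  have := seq_nf T
  rwa [h] at this

theorem nf_smul_arrow (h1 : (1:S) ≠ 0) {a : S} (ha : a ≠ 0) (U T : STy S) :
    nf (STy.smul a (STy.arrow U T)) = STy.smul a (STy.arrow (nf U) (nf T)) := by
  rw [nf_smul_of_smul a (show nf (STy.arrow U T) = STy.smul 1 (STy.arrow (nf U) (nf T)) by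
      rw [nf_arrow, mkS_eq_smul h1]), mul_one, mkS_eq_smul ha]

/-- From `Γ ⊢ t : «a.T»`-style information extract the skeleton of `T`. -/
theorem skw_of_ew {T : STy S} {d : S} {N : STy S}
    (hnfT : nf T = STy.smul d N)
    (hEW : ∃ W, SEq T W ∧ STy.WF W) (h1 : (1:S) ≠ 0) : SkW N := by
  obtain ⟨W, hs, hw⟩ := hEW
  have h := (nf_unit_wf h1 W).2 hw
  rw [← nf_sound hs, hnfT] at h
  exact nwp_smul_inv h

theorem typ_ew {Γ : List (STy S)} {t : Trm S} {T : STy S} (h : Typ Γ t T) :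
    (∀ U ∈ Γ, STy.IsUnit U) → ∃ T', SEq T T' ∧ STy.WF T' := by
  by_cases h1 : (1:S) = 0
  · intro _
    exact ⟨STy.zero, seq_trivial h1 T STy.zero, STy.WF.zero⟩
  induction h with
  | @ax Γ n U hget =>
      intro hΓ
      exact ⟨U, SEq.refl U, STy.WF.unit (hΓ U (List.mem_of_getElem? hget))⟩
  | @equiv Γ t T T' _ hTT' ih =>
      intro hΓ
      obtain ⟨T'', hs, hw⟩ := ih hΓ
      exact ⟨T'', hTT'.symm.trans hs, hw⟩
  | @arrE Γ t r U T a b _ _ ih1 ih2 =>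
      intro hΓ
      rcases nf_shape T with hT | ⟨d, N, hT, hd⟩
      · refine ⟨STy.zero, ?_, STy.WF.zero⟩
        exact (SEq.smulCong (a*b) (seq_of_nf_zero hT)).trans (SEq.smulZero _)
      · have hTd : SEq T (STy.smul d N) := by have := seq_nf T; rwa [hT] at this
        by_cases habd : (a*b)*d = 0
        · refine ⟨STy.zero, ?_, STy.WF.zero⟩
          have : SEq (STy.smul (a*b) T) (STy.smul ((a*b)*d) N) :=
            (SEq.smulCong (a*b) hTd).trans (SEq.smulSmul (a*b) d N)
          rw [habd] at this
          exact this.trans (SEq.zeroSmul N)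
        · have ha : a ≠ 0 := by
            intro h0; exact habd (by rw [h0, zero_mul, zero_mul])
          -- analyse the first premise
          have hEW := ih1 hΓ
          have hnf1 : nf (STy.smul a (STy.arrow U T)) =
              STy.smul a (STy.arrow (nf U) (nf T)) := nf_smul_arrow h1 ha U T
          obtain ⟨W1, hs1, hw1⟩ := hEW
          have hN1 := (nf_unit_wf h1 W1).2 hw1
          rw [← nf_sound hs1, hnf1] at hN1
          have hskArr : SkW (STy.arrow (nf U) (nf T)) := nwp_smul_inv hN1
          obtain ⟨P, _, _, hNWT⟩ := skw_arrow_inv hskArr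
          rw [hT] at hNWT
          have hskN : SkW N := nwp_smul_inv hNWT
          obtain ⟨W, hwW, hsW⟩ := real_skw hskN ((a*b)*d)
          refine ⟨W, ?_, hwW⟩
          exact ((SEq.smulCong (a*b) hTd).trans (SEq.smulSmul (a*b) d N)).trans hsW
  | @arrI Γ t U T hU _ ih =>
      intro hΓ
      obtain ⟨T'', hs, hw⟩ := ih (by
        intro W hW
        rw [List.mem_cons] at hW
        rcases hW with rfl | hW
        · exact hU
        · exact hΓ W hW)
      exact ⟨STy.arrow U T'', SEq.arrowCong (SEq.refl U) hs,
        STy.WF.unit (STy.IsUnit.arrow hU hw)⟩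
  | @allE Γ t T U _ hUu ih =>
      intro hΓ
      rcases nf_shape T with hT | ⟨d, N, hT, hd⟩
      · refine ⟨STy.zero, ?_, STy.WF.zero⟩
        have := seq_subst (seq_of_nf_zero hT) U 0
        simpa only [STy.substTV] using this
      · have hTd : SEq T (STy.smul d N) := by have := seq_nf T; rwa [hT] at this
        obtain ⟨W1, hs1, hw1⟩ := ih hΓ
        have hN1 := (nf_unit_wf h1 W1).2 hw1
        rw [← nf_sound hs1, nf_all_of_smul hT] at hN1
        have hskN : SkW N := skw_all_inv (nwp_smul_inv hN1)
        obtain ⟨W, hwW, hsW⟩ := real_skw hskN d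
        have hTW : SEq T W := hTd.trans hsW
        refine ⟨STy.substTV W U 0, seq_subst hTW U 0, (unit_wf_subst W U 0 hUu).2 hwW⟩
  | @allI Γ t T _ ih =>
      intro hΓ
      obtain ⟨T'', hs, hw⟩ := ih (by
        intro W hW
        rw [List.mem_map] at hW
        obtain ⟨W', hW', rfl⟩ := hW
        exact (unit_wf_shift W' 1 0).1 (hΓ W' hW'))
      exact ⟨STy.all T'', SEq.allCong hs, STy.WF.all hw⟩
  | ax0 =>
      intro _
      exact ⟨STy.zero, SEq.refl _, STy.WF.zero⟩
  | @addI Γ t r T a b _ _ ih1 ih2 =>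
      intro hΓ
      rcases nf_shape T with hT | ⟨d, N, hT, hd⟩
      · refine ⟨STy.zero, ?_, STy.WF.zero⟩
        exact (SEq.smulCong (a+b) (seq_of_nf_zero hT)).trans (SEq.smulZero _)
      · have hTd : SEq T (STy.smul d N) := by have := seq_nf T; rwa [hT] at this
        by_cases habd : (a+b)*d = 0
        · refine ⟨STy.zero, ?_, STy.WF.zero⟩
          have : SEq (STy.smul (a+b) T) (STy.smul ((a+b)*d) N) :=
            (SEq.smulCong (a+b) hTd).trans (SEq.smulSmul (a+b) d N)
          rw [habd] at this
          exact this.trans (SEq.zeroSmul N)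
        · have key : ∀ (c : S), c * d ≠ 0 →
              (∃ W, SEq (STy.smul c T) W ∧ STy.WF W) → SkW N := by
            intro c hcd hEW
            obtain ⟨W, hs, hw⟩ := hEW
            have hN := (nf_unit_wf h1 W).2 hw
            rw [← nf_sound hs, nf_smul_of_smul c hT, mkS_eq_smul hcd] at hN
            exact nwp_smul_inv hN
          have hor : a * d ≠ 0 ∨ b * d ≠ 0 := by
            by_contra hcon
            push_neg at hcon
            exact habd (by rw [add_mul, hcon.1, hcon.2, add_zero])
          have hskN : SkW N := by
            rcases hor with h | h
            · exact key a h (ih1 hΓ)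
            · exact key b h (ih2 hΓ)
          obtain ⟨W, hwW, hsW⟩ := real_skw hskN ((a+b)*d)
          exact ⟨W, ((SEq.smulCong (a+b) hTd).trans (SEq.smulSmul (a+b) d N)).trans hsW, hwW⟩
  | @smulI Γ t T a _ ih =>
      intro hΓ
      obtain ⟨T'', hs, hw⟩ := ih hΓ
      exact ⟨STy.smul a T'', SEq.smulCong a hs, STy.WF.smul a hw⟩

end TypEW

/-! ### Height-indexed typing -/

section TypHSec

variable {S : Type} [CommRing S]

inductive TypH : ℕ → List (STy S) → Trm S → STy S → Prop
  | ax {n : ℕ} {Γ : List (STy S)} {k : ℕ} {U : STy S} :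
      Γ[k]? = some U → TypH n Γ (Trm.var k) U
  | equiv {n : ℕ} {Γ : List (STy S)} {t : Trm S} {T T' : STy S} :
      TypH n Γ t T → SEq T T' → TypH (n+1) Γ t T'
  | arrE {n : ℕ} {Γ : List (STy S)} {t r : Trm S} {U T : STy S} {a b : S} :
      TypH n Γ t (STy.smul a (STy.arrow U T)) → TypH n Γ r (STy.smul b U) →
      TypH (n+1) Γ (Trm.app t r) (STy.smul (a * b) T)
  | arrI {n : ℕ} {Γ : List (STy S)} {t : Trm S} {U T : STy S} :
      STy.IsUnit U → TypH n (U :: Γ) t T → TypH (n+1) Γ (Trm.lam t) (STy.arrow U T)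
  | allE {n : ℕ} {Γ : List (STy S)} {t : Trm S} {T U : STy S} :
      TypH n Γ t (STy.all T) → STy.IsUnit U → TypH (n+1) Γ t (STy.substTV T U 0)
  | allI {n : ℕ} {Γ : List (STy S)} {t : Trm S} {T : STy S} :
      TypH n (Γ.map (STy.shiftTV 1 0)) t T → TypH (n+1) Γ t (STy.all T)
  | ax0 {n : ℕ} {Γ : List (STy S)} : TypH n Γ Trm.zero STy.zero
  | addI {n : ℕ} {Γ : List (STy S)} {t r : Trm S} {T : STy S} {a b : S} :
      TypH n Γ t (STy.smul a T) → TypH n Γ r (STy.smul b T) →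
      TypH (n+1) Γ (Trm.add t r) (STy.smul (a + b) T)
  | smulI {n : ℕ} {Γ : List (STy S)} {t : Trm S} {T : STy S} (a : S) :
      TypH n Γ t T → TypH (n+1) Γ (Trm.smul a t) (STy.smul a T)

theorem typH_mono {n : ℕ} {Γ : List (STy S)} {t : Trm S} {T : STy S}
    (h : TypH n Γ t T) : ∀ m, n ≤ m → TypH m Γ t T := by
  induction h with
  | ax hget => intro m _; exact TypH.ax hget
  | equiv _ hs ih =>
      intro m hm
      obtain ⟨m', rfl⟩ : ∃ m', m = m' + 1 := ⟨m - 1, by omega⟩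
      exact TypH.equiv (ih m' (by omega)) hs
  | arrE _ _ ih1 ih2 =>
      intro m hm
      obtain ⟨m', rfl⟩ : ∃ m', m = m' + 1 := ⟨m - 1, by omega⟩
      exact TypH.arrE (ih1 m' (by omega)) (ih2 m' (by omega))
  | arrI hU _ ih =>
      intro m hm
      obtain ⟨m', rfl⟩ : ∃ m', m = m' + 1 := ⟨m - 1, by omega⟩
      exact TypH.arrI hU (ih m' (by omega))
  | allE _ hU ih =>
      intro m hm
      obtain ⟨m', rfl⟩ : ∃ m', m = m' + 1 := ⟨m - 1, by omega⟩
      exact TypH.allE (ih m' (by omega)) hU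
  | allI _ ih =>
      intro m hm
      obtain ⟨m', rfl⟩ : ∃ m', m = m' + 1 := ⟨m - 1, by omega⟩
      exact TypH.allI (ih m' (by omega))
  | ax0 => intro m _; exact TypH.ax0
  | addI _ _ ih1 ih2 =>
      intro m hm
      obtain ⟨m', rfl⟩ : ∃ m', m = m' + 1 := ⟨m - 1, by omega⟩
      exact TypH.addI (ih1 m' (by omega)) (ih2 m' (by omega))
  | smulI a _ ih =>
      intro m hm
      obtain ⟨m', rfl⟩ : ∃ m', m = m' + 1 := ⟨m - 1, by omega⟩
      exact TypH.smulI a (ih m' (by omega))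

theorem typ_typH {Γ : List (STy S)} {t : Trm S} {T : STy S} (h : Typ Γ t T) :
    ∃ n, TypH n Γ t T := by
  induction h with
  | ax hget => exact ⟨0, TypH.ax hget⟩
  | equiv _ hs ih => obtain ⟨n, hn⟩ := ih; exact ⟨n+1, TypH.equiv hn hs⟩
  | arrE _ _ ih1 ih2 =>
      obtain ⟨n1, h1⟩ := ih1; obtain ⟨n2, h2⟩ := ih2
      exact ⟨max n1 n2 + 1, TypH.arrE (typH_mono h1 _ (le_max_left _ _))
        (typH_mono h2 _ (le_max_right _ _))⟩
  | arrI hU _ ih => obtain ⟨n, hn⟩ := ih; exact ⟨n+1, TypH.arrI hU hn⟩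
  | allE _ hU ih => obtain ⟨n, hn⟩ := ih; exact ⟨n+1, TypH.allE hn hU⟩
  | allI _ ih => obtain ⟨n, hn⟩ := ih; exact ⟨n+1, TypH.allI hn⟩
  | ax0 => exact ⟨0, TypH.ax0⟩
  | addI _ _ ih1 ih2 =>
      obtain ⟨n1, h1⟩ := ih1; obtain ⟨n2, h2⟩ := ih2
      exact ⟨max n1 n2 + 1, TypH.addI (typH_mono h1 _ (le_max_left _ _))
        (typH_mono h2 _ (le_max_right _ _))⟩
  | smulI a _ ih => obtain ⟨n, hn⟩ := ih; exact ⟨n+1, TypH.smulI a hn⟩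

theorem typH_typ {n : ℕ} {Γ : List (STy S)} {t : Trm S} {T : STy S} (h : TypH n Γ t T) :
    Typ Γ t T := by
  induction h with
  | ax hget => exact Typ.ax hget
  | equiv _ hs ih => exact Typ.equiv ih hs
  | arrE _ _ ih1 ih2 => exact Typ.arrE ih1 ih2
  | arrI hU _ ih => exact Typ.arrI hU ih
  | allE _ hU ih => exact Typ.allE ih hU
  | allI _ ih => exact Typ.allI ih
  | ax0 => exact Typ.ax0
  | addI _ _ ih1 ih2 => exact Typ.addI ih1 ih2
  | smulI a _ ih => exact Typ.smulI a ih

/-- Type substitution preserves typing, and the height of the derivation. -/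
theorem typH_subst {V : STy S} (hV : STy.IsUnit V) :
    ∀ {n : ℕ} {Γ : List (STy S)} {t : Trm S} {T : STy S}, TypH n Γ t T →
    ∀ j, TypH n (Γ.map (fun W => STy.substTV W V j)) t (STy.substTV T V j) := by
  intro n Γ t T h
  induction h with
  | @ax n Γ k U hget =>
      intro j
      exact TypH.ax (by rw [List.getElem?_map, hget]; rfl)
  | equiv _ hs ih => intro j; exact TypH.equiv (ih j) (seq_subst hs V j)
  | @arrE n Γ t r U T a b _ _ ih1 ih2 =>
      intro j
      have h1 := ih1 j
      have h2 := ih2 j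
      simp only [STy.substTV] at h1 h2 ⊢
      exact TypH.arrE h1 h2
  | @arrI n Γ t U T hU _ ih =>
      intro j
      have h1 := ih j
      rw [List.map_cons] at h1
      simp only [STy.substTV]
      exact TypH.arrI ((unit_wf_subst U V j hV).1 hU) h1
  | @allE n Γ t T U _ hUu ih =>
      intro j
      have h1 := ih j
      simp only [STy.substTV] at h1
      have := TypH.allE h1 ((unit_wf_subst U V j hV).1 hUu)
      rw [STy.subst_subst T U V 0 j (Nat.zero_le j), Nat.sub_zero]
      exact this
  | @allI n Γ t T _ ih =>
      intro j
      have h1 := ih (j+1)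
      simp only [STy.substTV]
      apply TypH.allI
      rw [List.map_map] at h1
      rw [List.map_map]
      have : ((fun W => STy.substTV W V (j+1)) ∘ STy.shiftTV 1 0)
          = (STy.shiftTV 1 0 ∘ fun W => STy.substTV W V j) := by
        funext W
        simp only [Function.comp]
        exact STy.shift_subst_comm W V 0 j (Nat.zero_le j)
      rw [this] at h1
      exact h1
  | ax0 => intro j; simp only [STy.substTV]; exact TypH.ax0
  | @addI n Γ t r T a b _ _ ih1 ih2 =>
      intro j
      have h1 := ih1 j
      have h2 := ih2 j
      simp only [STy.substTV] at h1 h2 ⊢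
      exact TypH.addI h1 h2
  | @smulI n Γ t T a _ ih =>
      intro j
      have h1 := ih j
      simp only [STy.substTV]
      exact TypH.smulI a h1

end TypHSec

/-! ### Context conversion -/

section CtxConv

variable {S : Type} [CommRing S]

theorem forall2_get? {R : STy S → STy S → Prop} :
    ∀ {l₁ l₂ : List (STy S)}, List.Forall₂ R l₁ l₂ →
    ∀ {n : ℕ} {a : STy S}, l₁[n]? = some a → ∃ b, l₂[n]? = some b ∧ R a b := by
  intro l₁ l₂ h
  induction h with
  | nil => intro n a hget; simp at hget
  | @cons a' b' l₁' l₂' hR _ ih =>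
      intro n a hget
      cases n with
      | zero =>
          simp only [List.getElem?_cons_zero] at hget ⊢
          cases hget
          exact ⟨b', rfl, hR⟩
      | succ n =>
          simp only [List.getElem?_cons_succ] at hget ⊢
          exact ih hget

theorem forall2_seq_map_shift {Γ₁ Γ₂ : List (STy S)} (h : List.Forall₂ SEq Γ₁ Γ₂) :
    List.Forall₂ SEq (Γ₁.map (STy.shiftTV 1 0)) (Γ₂.map (STy.shiftTV 1 0)) := by
  induction h with
  | nil => exact List.Forall₂.nil
  | cons hR _ ih => exact List.Forall₂.cons (seq_shift hR 1 0) ih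

theorem ctx_conv : ∀ {Γ₁ : List (STy S)} {t : Trm S} {T : STy S}, Typ Γ₁ t T →
    ∀ {Γ₂ : List (STy S)}, List.Forall₂ SEq Γ₁ Γ₂ → Typ Γ₂ t T := by
  intro Γ₁ t T h
  induction h with
  | ax hget =>
      intro Γ₂ h12
      obtain ⟨b, hb, hR⟩ := forall2_get? h12 hget
      exact Typ.equiv (Typ.ax hb) hR.symm
  | equiv _ hs ih => intro Γ₂ h12; exact Typ.equiv (ih h12) hs
  | arrE _ _ ih1 ih2 => intro Γ₂ h12; exact Typ.arrE (ih1 h12) (ih2 h12)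
  | @arrI Γ t U T hU _ ih =>
      intro Γ₂ h12
      exact Typ.arrI hU (ih (List.Forall₂.cons (SEq.refl U) h12))
  | allE _ hU ih => intro Γ₂ h12; exact Typ.allE (ih h12) hU
  | allI _ ih => intro Γ₂ h12; exact Typ.allI (ih (forall2_seq_map_shift h12))
  | ax0 => intro Γ₂ _; exact Typ.ax0
  | addI _ _ ih1 ih2 => intro Γ₂ h12; exact Typ.addI (ih1 h12) (ih2 h12)
  | smulI a _ ih => intro Γ₂ h12; exact Typ.smulI a (ih h12)

theorem ctx_conv_head {U U' : STy S} {Γ : List (STy S)} {t : Trm S} {T : STy S}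
    (h : Typ (U :: Γ) t T) (hUU' : SEq U U') : Typ (U' :: Γ) t T :=
  ctx_conv h (List.Forall₂.cons hUU' (List.forall₂_same.2 (fun x _ => SEq.refl x)))

end CtxConv

/-! ### Lemmas about `≺` and `⪯` -/

section PrecLemmas

variable {S : Type} [CommRing S]

theorem seq_to_precEq {A B : STy S} (h : SEq A B) : PrecEq A B := by
  have step1 : Prec A (STy.all (STy.closeTV A 0 0)) := Or.inl ⟨0, SEq.refl _⟩
  have step2 : Prec (STy.all (STy.closeTV A 0 0)) B := by
    refine Or.inr ⟨STy.closeTV A 0 0, STy.var 0, STy.IsUnit.var 0, SEq.refl _, ?_⟩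
    rw [STy.close_subst_cancel]
    exact h.symm
  exact Relation.ReflTransGen.head step1 (Relation.ReflTransGen.single step2)

theorem prec_seq_right {A B B' : STy S} (h : Prec A B) (hBB' : SEq B B') : Prec A B' := by
  rcases h with ⟨m, hB⟩ | ⟨Sb, U, hU, h1, h2⟩
  · exact Or.inl ⟨m, hBB'.symm.trans hB⟩
  · exact Or.inr ⟨Sb, U, hU, h1, hBB'.symm.trans h2⟩

theorem precEq_seq_right {A B B' : STy S} (h : PrecEq A B) (hBB' : SEq B B') :
    PrecEq A B' := by
  rcases Relation.ReflTransGen.cases_tail h with rfl | ⟨c, hc, hcB⟩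
  · exact seq_to_precEq hBB'
  · exact hc.tail (prec_seq_right hcB hBB')

theorem prec_subst_fresh {A B : STy S} (n : ℕ) (hcond : ∀ k ∈ STy.ftv A, k < n)
    (h : Prec A B) :
    Prec (STy.substTV A (STy.var n) 0) (STy.substTV B (STy.var n) 0) := by
  rcases h with ⟨m, hB⟩ | ⟨Sb, U, hU, h1, h2⟩
  · by_cases hm : m ∈ STy.ftv A
    · have hm' : m < n := hcond m hm
      have hfresh : (n+1) ∉ STy.ftvAux A 0 := fun hc => by
        have := hcond _ hc; omega
      have hc := STy.close_subst_comm A m n 0 (by omega) hfresh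
      refine Or.inl ⟨if m = 0 then n else m - 1, ?_⟩
      have := seq_subst hB (STy.var n) 0
      simp only [STy.substTV] at this
      rwa [hc] at this
    · have hcl : STy.closeTV A m 0 = STy.shiftTV 1 0 A := STy.close_not_free A m 0 hm
      refine Or.inl ⟨n + 1, ?_⟩
      have hfresh2 : (n+1) ∉ STy.ftvAux (STy.substTV A (STy.var n) 0) 0 := by
        intro hc
        rcases STy.ftv_subst_var A n 0 (n+1) hc with h' | h'
        · omega
        · have := hcond _ h'; omega
      have hcl2 : STy.closeTV (STy.substTV A (STy.var n) 0) (n+1) 0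
          = STy.shiftTV 1 0 (STy.substTV A (STy.var n) 0) :=
        STy.close_not_free _ _ _ hfresh2
      rw [hcl2]
      have := seq_subst hB (STy.var n) 0
      simp only [STy.substTV] at this
      rwa [hcl, STy.shift_subst_comm A (STy.var n) 0 0 le_rfl] at this
  · refine Or.inr ⟨STy.substTV Sb (STy.var n) 1, STy.substTV U (STy.var n) 0,
      (unit_wf_subst U (STy.var n) 0 (STy.IsUnit.var n)).1 hU, ?_, ?_⟩
    · have := seq_subst h1 (STy.var n) 0
      simpa only [STy.substTV] using this
    · have := seq_subst h2 (STy.var n) 0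
      rwa [STy.subst_subst Sb U (STy.var n) 0 0 le_rfl, Nat.sub_zero] at this

theorem precEq_subst_fresh {A B : STy S} (h : PrecEq A B) :
    ∃ N, ∀ n, N ≤ n →
      PrecEq (STy.substTV A (STy.var n) 0) (STy.substTV B (STy.var n) 0) := by
  induction h with
  | refl => exact ⟨0, fun n _ => Relation.ReflTransGen.refl⟩
  | @tail B C hAB hBC ih =>
      obtain ⟨N₁, hN₁⟩ := ih
      refine ⟨max N₁ ((STy.ftv B).sup id + 1), fun n hn => ?_⟩
      have hcond : ∀ k ∈ STy.ftv B, k < n := by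
        intro k hk
        have := Finset.le_sup (f := id) hk
        simp only [id] at this
        omega
      exact (hN₁ n (by omega)).tail (prec_subst_fresh n hcond hBC)

end PrecLemmas

/-! ### Part 1 of the generation lemma -/

section Gen1

variable {S : Type} [CommRing S]

theorem typ_subst {Γ : List (STy S)} {t : Trm S} {T V : STy S} (h : Typ Γ t T)
    (hV : STy.IsUnit V) (j : ℕ) :
    Typ (Γ.map (fun W => STy.substTV W V j)) t (STy.substTV T V j) := by
  obtain ⟨n, hn⟩ := typ_typH h
  exact typH_typ (typH_subst hV hn j)

theorem gen1 : ∀ {Γ : List (STy S)} {s : Trm S} {T : STy S}, Typ Γ s T →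
    ∀ t : Trm S, s = Trm.lam t → (∀ U ∈ Γ, STy.IsUnit U) →
    ∃ U R : STy S, STy.IsUnit U ∧ STy.WF R ∧ Typ (U :: Γ) t R ∧
      PrecEq (STy.arrow U R) T := by
  intro Γ s T h
  induction h with
  | ax _ => exact fun t heq _ => by cases heq
  | @equiv Γ t₀ T T' _ hs ih =>
      intro t rfl hΓ
      obtain ⟨U, R, hU, hR, hTy, hP⟩ := ih t rfl hΓ
      exact ⟨U, R, hU, hR, hTy, precEq_seq_right hP hs⟩
  | arrE _ _ _ _ => exact fun t heq _ => by cases heq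
  | @arrI Γ t₀ U T hU ht ih =>
      intro t heq hΓ
      injection heq with heq
      subst heq
      have hctx : ∀ W ∈ U :: Γ, STy.IsUnit W := by
        intro W hW
        rw [List.mem_cons] at hW
        rcases hW with rfl | hW
        · exact hU
        · exact hΓ W hW
      obtain ⟨R, hsR, hwR⟩ := typ_ew ht hctx
      exact ⟨U, R, hU, hwR, Typ.equiv ht hsR,
        seq_to_precEq (SEq.arrowCong (SEq.refl U) hsR.symm)⟩
  | @allE Γ t₀ T U₀ _ hU₀ ih =>
      intro t rfl hΓ
      obtain ⟨U, R, hU, hR, hTy, hP⟩ := ih t rfl hΓ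
      exact ⟨U, R, hU, hR, hTy,
        hP.tail (Or.inr ⟨T, U₀, hU₀, SEq.refl _, SEq.refl _⟩)⟩
  | @allI Γ t₀ T _ ih =>
      intro t rfl hΓ
      have hΓ' : ∀ W ∈ Γ.map (STy.shiftTV 1 0), STy.IsUnit W := by
        intro W hW
        rw [List.mem_map] at hW
        obtain ⟨W', hW', rfl⟩ := hW
        exact (unit_wf_shift W' 1 0).1 (hΓ W' hW')
      obtain ⟨U, R, hU, hR, hTy, hP⟩ := ih t rfl hΓ'
      obtain ⟨N, hN⟩ := precEq_subst_fresh hP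
      set n : ℕ := max N ((STy.ftv T).sup id + 1) with hn
      have hfresh : ∀ k ∈ STy.ftv T, k < n := by
        intro k hk
        have := Finset.le_sup (f := id) hk
        simp only [id] at this
        omega
      have htrans := hN n (le_max_left _ _)
      simp only [STy.substTV] at htrans
      have hstep : Prec (STy.substTV T (STy.var n) 0) (STy.all T) := by
        refine Or.inl ⟨n, ?_⟩
        rw [STy.subst_close_cancel T n 0 (fun hc => by have := hfresh _ hc; omega)]
        exact SEq.refl _
      have hTy' := typ_subst hTy (STy.IsUnit.var n) 0
      rw [List.map_cons, List.map_map] at hTy'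
      have hctxid : List.map ((fun W => STy.substTV W (STy.var n) 0) ∘ STy.shiftTV 1 0) Γ
          = Γ := by
        have : ((fun W => STy.substTV W (STy.var n) 0) ∘ STy.shiftTV 1 0) = (id : STy S → STy S) := by
          funext W
          simp only [Function.comp, id]
          exact STy.subst_shift_cancel W (STy.var n) 0
        rw [this, List.map_id]
      rw [hctxid] at hTy'
      exact ⟨STy.substTV U (STy.var n) 0, STy.substTV R (STy.var n) 0,
        (unit_wf_subst U _ 0 (STy.IsUnit.var n)).1 hU,
        (unit_wf_subst R _ 0 (STy.IsUnit.var n)).2 hR,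
        hTy', htrans.tail hstep⟩
  | ax0 => exact fun t heq _ => by cases heq
  | addI _ _ _ _ => exact fun t heq _ => by cases heq
  | smulI _ _ _ => exact fun t heq _ => by cases heq

end Gen1

/-! ### Part 2: the corollary -/

section Gen2

variable {S : Type} [CommRing S]

/-- Chains of `∀`-instantiations modulo `≡`. -/
inductive Inst : STy S → STy S → Prop
  | base {A B : STy S} : SEq A B → Inst A B
  | step {A C V B : STy S} : SEq A (STy.all C) → STy.IsUnit V →
      Inst (STy.substTV C V 0) B → Inst A B

theorem inst_seq_left {A' A B : STy S} (hs : SEq A' A) (h : Inst A B) : Inst A' B := by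
  cases h with
  | base h => exact Inst.base (hs.trans h)
  | step h hV hi => exact Inst.step (hs.trans h) hV hi

theorem map_shift_subst_cancel (Γ : List (STy S)) (V : STy S) :
    (Γ.map (STy.shiftTV 1 0)).map (fun W => STy.substTV W V 0) = Γ := by
  rw [List.map_map]
  have : ((fun W => STy.substTV W V 0) ∘ STy.shiftTV 1 0) = (id : STy S → STy S) := by
    funext W
    simp only [Function.comp, id]
    exact STy.subst_shift_cancel W V 0
  rw [this, List.map_id]

theorem main2 (h1 : (1:S) ≠ 0) : ∀ n : ℕ, ∀ {Γ : List (STy S)} {t : Trm S} {T₁ : STy S},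
    TypH n Γ (Trm.lam t) T₁ → ∀ {U T : STy S}, Inst T₁ (STy.arrow U T) →
    STy.IsUnit U → Typ (U :: Γ) t T := by
  intro n
  induction n using Nat.strong_induction_on with
  | _ n ih =>
      intro Γ t T₁ h U T hInst hU
      cases h with
      | equiv hpre hs =>
          rename_i m T₀
          exact ih m (by omega) hpre (inst_seq_left hs hInst) hU
      | arrI hU₁ hbody =>
          rename_i m U₁ T₀
          cases hInst with
          | base hs =>
              obtain ⟨hsU, hsT⟩ := seq_arrow_arrow h1 hs
              exact Typ.equiv (ctx_conv_head (typH_typ hbody) hsU) hsT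
          | step hs _ _ => exact (seq_arrow_all h1 hs).elim
      | allE hall hU₀ =>
          rename_i m T₀ U₀
          exact ih m (by omega) hall (Inst.step (SEq.refl _) hU₀ hInst) hU
      | allI hpre =>
          rename_i m T₂
          cases hInst with
          | base hs => exact (seq_arrow_all h1 hs.symm).elim
          | @step _ C V _ hs hV hi =>
              have hTC : SEq T₂ C := seq_all_all hs
              have hi' : Inst (STy.substTV T₂ V 0) (STy.arrow U T) :=
                inst_seq_left (seq_subst hTC V 0) hi
              have hpre' := typH_subst hV hpre 0
              rw [map_shift_subst_cancel] at hpre'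
              exact ih m (by omega) hpre' hi' hU

theorem gen2 {Γ : List (STy S)} {t : Trm S} {U T : STy S}
    (hΓ : ∀ W ∈ Γ, STy.IsUnit W) (hU : STy.IsUnit U)
    (h : Typ Γ (Trm.lam t) (STy.arrow U T)) : Typ (U :: Γ) t T := by
  by_cases h1 : (1:S) = 0
  · obtain ⟨U₁, R₁, hU₁, hR₁, hTy₁, _⟩ := gen1 h t rfl hΓ
    exact Typ.equiv (ctx_conv_head hTy₁ (seq_trivial h1 U₁ U)) (seq_trivial h1 R₁ T)
  · obtain ⟨n, hn⟩ := typ_typH h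
    exact main2 h1 n hn (Inst.base (SEq.refl _)) hU

end Gen2

end Lineal
namespace Lineal

/-- **Generation lemma, abstractions, and its corollary.**
(1) If `Γ ⊢ λx.t : T` then there are a unit type `U` and a type `R` with
`Γ, x:U ⊢ t : R` and `U→R ⪯ T`.
(2) If `Γ ⊢ λx.t : U→T` with `U` a unit type then `Γ, x:U ⊢ t : T`. -/
theorem generation_abs {S : Type} [CommRing S] :
    (∀ (t : Trm S) (T : STy S) (Γ : List (STy S)),
      (∀ U ∈ Γ, STy.IsUnit U) → STy.WF T → Typ Γ (Trm.lam t) T →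
      ∃ (U R : STy S), STy.IsUnit U ∧ STy.WF R ∧ Typ (U :: Γ) t R ∧
        PrecEq (STy.arrow U R) T) ∧
    (∀ (t : Trm S) (U T : STy S) (Γ : List (STy S)),
      (∀ W ∈ Γ, STy.IsUnit W) → STy.IsUnit U → STy.WF T →
      Typ Γ (Trm.lam t) (STy.arrow U T) → Typ (U :: Γ) t T) := by
  constructor
  · intro t T Γ hΓ _ h
    exact gen1 h t rfl hΓ
  · intro t U T Γ hΓ hU _ h
    exact gen2 hΓ hU h

end Lineal
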